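/- arXiv:2103.11875 — 4 statements merged into one kernel-verified Lean document; each statement's English description precedes it below -/
import Mathlib

section
/- Let a₁ > 1 > a₂ > 0 and 0 < p < 1 be real numbers. Define φ(δ) = p·a₁^{-δ} + (1-p)·a₂^{-δ}. If (1-p)·ln(1/a₂) < p·ln(a₁), then the point δ₀ = -ln(-(1-p)/p · ln(a₂)/ln(a₁)) / ln(a₁/a₂) satisfies δ₀ > 0 and φ(δ₀) < 1. -/
/-- Calculation 2.2 (second part): under the balance condition, the critical point
`δ₀` is positive and `φ δ₀ < 1`. -/
theorem stmt_0 (a₁ a₂ p : ℝ) (ha₁ : 1 < a₁) (ha₂0 : 0 < a₂) (ha₂1 : a₂ < 1)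
    (hp0 : 0 < p) (hp1 : p < 1)
    (hbal : (1 - p) * Real.log (1 / a₂) < p * Real.log a₁) :
    let φ : ℝ → ℝ := fun δ => p * a₁ ^ (-δ) + (1 - p) * a₂ ^ (-δ)
    let δ₀ : ℝ :=
      -Real.log (-(1 - p) / p * (Real.log a₂ / Real.log a₁)) / Real.log (a₁ / a₂)
    0 < δ₀ ∧ φ δ₀ < 1 := by
  intro φ δ₀
  have hφ : φ δ₀ = p * a₁ ^ (-δ₀) + (1 - p) * a₂ ^ (-δ₀) := rfl
  have hδ : δ₀ =
      -Real.log (-(1 - p) / p * (Real.log a₂ / Real.log a₁)) / Real.log (a₁ / a₂) := rfl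
  have ha₁0 : (0:ℝ) < a₁ := by linarith
  have hL₁ : 0 < Real.log a₁ := Real.log_pos ha₁
  have hL₂ : Real.log a₂ < 0 := Real.log_neg ha₂0 ha₂1
  set L₁ := Real.log a₁ with hL1
  set L₂ := Real.log a₂ with hL2
  have hbal' : (1 - p) * (-L₂) < p * L₁ := by
    rw [one_div, Real.log_inv] at hbal
    exact hbal
  have hp1' : 0 < 1 - p := by linarith
  have hd : 0 < L₁ - L₂ := by linarith
  set c : ℝ := -(1 - p) / p * (L₂ / L₁) with hc
  have hc0 : 0 < c := by
    rw [hc]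
    exact mul_pos_of_neg_of_neg (div_neg_of_neg_of_pos (by linarith) hp0)
      (div_neg_of_neg_of_pos hL₂ hL₁)
  have hceq : c = ((1 - p) * (-L₂)) / (p * L₁) := by
    rw [hc]; field_simp
  have hc1 : c < 1 := by
    rw [hceq, div_lt_one (by positivity)]
    linarith [hbal']
  have hlc : Real.log c < 0 := Real.log_neg hc0 hc1
  have hlogdiv : Real.log (a₁ / a₂) = L₁ - L₂ := Real.log_div (ne_of_gt ha₁0) (ne_of_gt ha₂0)
  rw [hlogdiv] at hδ
  set t : ℝ := L₁ / (L₁ - L₂) with ht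
  have ht0 : 0 < t := div_pos hL₁ hd
  have ht1 : t < 1 := by rw [ht, div_lt_one hd]; linarith
  have h1t : 0 < 1 - t := by linarith
  have htp : 1 - p < t := by
    rw [ht, lt_div_iff₀ hd]; nlinarith [hbal']
  constructor
  · rw [hδ]
    exact div_pos (by linarith) hd
  · -- φ δ₀ < 1
    have e₁ : a₁ ^ (-δ₀) = Real.exp (t * Real.log c) := by
      rw [Real.rpow_def_of_pos ha₁0, ← hL1, hδ, ht]
      congr 1
      field_simp
    have e₂ : a₂ ^ (-δ₀) = Real.exp ((t - 1) * Real.log c) := by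
      rw [Real.rpow_def_of_pos ha₂0, ← hL2, hδ, ht]
      congr 1
      field_simp
      ring
    have e₃ : Real.exp ((t - 1) * Real.log c) = Real.exp (t * Real.log c) / c := by
      rw [show (t - 1) * Real.log c = t * Real.log c - Real.log c by ring,
        Real.exp_sub, Real.exp_log hc0]
    have hne : 0 < p * L₂ - L₂ := by nlinarith [mul_pos hp1' (neg_pos.mpr hL₂)]
    have hkey2 : p + (1 - p) / c = p / (1 - t) := by
      rw [hceq, ht]
      field_simp [hp0.ne', hL₁.ne', hL₂.ne, hd.ne', hne.ne']
      all_goals ring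
    rw [hφ, e₁, e₂, e₃]
    have hre : p * Real.exp (t * Real.log c) + (1 - p) * (Real.exp (t * Real.log c) / c)
        = Real.exp (t * Real.log c) * (p + (1 - p) / c) := by
      field_simp
      all_goals ring
    rw [hre, hkey2]
    clear_value L₁ L₂ c t φ δ₀
    -- main inequality
    have hc3 : c = ((1 - p) / t) * ((1 - t) / p) := by
      rw [hceq, ht]
      field_simp [hp0.ne', hL₁.ne', hL₂.ne, hd.ne']
      all_goals ring
    have hX : Real.log (-(1 - p) / p * (L₂ / L₁)) = Real.log c := by rw [← hc]
    have hlogc : Real.log c = Real.log ((1 - p) / t) + Real.log ((1 - t) / p) := by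
      rw [hc3, Real.log_mul (by positivity) (by positivity)]
    have g1 : Real.log ((1 - p) / t) < (1 - p) / t - 1 := by
      apply Real.log_lt_sub_one_of_pos (by positivity)
      intro h
      rw [div_eq_one_iff_eq (ne_of_gt ht0)] at h
      linarith
    have g1' : t * Real.log ((1 - p) / t) < 1 - p - t := by
      calc t * Real.log ((1 - p) / t) < t * ((1 - p) / t - 1) :=
            mul_lt_mul_of_pos_left g1 ht0
        _ = 1 - p - t := by field_simp
    have g2a : Real.log (((1 - t) / p)⁻¹) ≤ p / (1 - t) - 1 := by
      rw [inv_div]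
      exact Real.log_le_sub_one_of_pos (by positivity)
    rw [Real.log_inv] at g2a
    have g2' : (1 - t) - p ≤ (1 - t) * Real.log ((1 - t) / p) := by
      have h := mul_le_mul_of_nonneg_left g2a h1t.le
      have hrhs : (1 - t) * (p / (1 - t) - 1) = p - (1 - t) := by field_simp
      rw [hrhs, mul_neg] at h
      linarith [h]
    rw [sub_mul, one_mul] at g2'
    have hmain : t * Real.log c < Real.log ((1 - t) / p) := by
      rw [hlogc, mul_add]
      linarith [g1', g2']
    have hElt : Real.exp (t * Real.log c) < (1 - t) / p := by
      rw [← Real.exp_log (show (0:ℝ) < (1 - t) / p by positivity)]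
      exact Real.exp_lt_exp.mpr hmain
    calc Real.exp (t * Real.log c) * (p / (1 - t))
        < ((1 - t) / p) * (p / (1 - t)) :=
          mul_lt_mul_of_pos_right hElt (by positivity)
      _ = 1 := by field_simp
end

section
/- Fix constants h, α, ζ, a₀ > 0 and a₁ > 1. For λ > 1 large enough so that 0 < a₂(λ) := a₀·λ^{-h} < 1 and 0 < p(λ) := 1 - ζ·λ^{-α} < 1 and the balance condition holds, define δ(λ) = -ln(-(1-p(λ))/p(λ) · ln(a₂(λ))/ln(a₁)) / ln(a₁/a₂(λ)). Then δ(λ) → α/h as λ → +∞. -/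
open Filter

/-- Calculation 2.4 (second part): the critical exponent
`δ(λ) = δ₀(a₁, a₂(λ); p(λ))` tends to `α/h` as `λ → +∞`, where
`a₂(λ) = a₀·λ^(-h)` and `p(λ) = 1 - ζ·λ^(-α)`. -/
theorem stmt_3 (h α ζ a₀ a₁ : ℝ) (hh : 0 < h) (hα : 0 < α) (hζ : 0 < ζ)
    (ha₀ : 0 < a₀) (ha₁ : 1 < a₁) :
    Tendsto
      (fun lam : ℝ =>
        -Real.log
            (-(1 - (1 - ζ * lam ^ (-α))) / (1 - ζ * lam ^ (-α)) *
              (Real.log (a₀ * lam ^ (-h)) / Real.log a₁)) /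
          Real.log (a₁ / (a₀ * lam ^ (-h))))
      atTop (nhds (α / h)) := by
  have hlogA : 0 < Real.log a₁ := Real.log_pos ha₁
  have hLtop : Tendsto Real.log atTop atTop := Real.tendsto_log_atTop
  have hinv : Tendsto (fun lam : ℝ => (Real.log lam)⁻¹) atTop (nhds 0) :=
    hLtop.inv_tendsto_atTop
  have hq0 : Tendsto (fun lam : ℝ => ζ * lam ^ (-α)) atTop (nhds 0) := by
    have := (tendsto_rpow_neg_atTop hα).const_mul ζ
    simpa using this
  -- the log(h·L - log a₀)/L → 0 limit
  have hA : Tendsto (fun lam : ℝ =>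
      Real.log (h * Real.log lam - Real.log a₀) / Real.log lam) atTop (nhds 0) := by
    have key : Tendsto (fun L : ℝ => Real.log (h * L - Real.log a₀) / L) atTop (nhds 0) := by
      have h1 : Tendsto (fun L : ℝ => Real.log L / L) atTop (nhds 0) :=
        Real.isLittleO_log_id_atTop.tendsto_div_nhds_zero
      have hc : Tendsto (fun L : ℝ => h - Real.log a₀ / L) atTop (nhds h) := by
        have := (tendsto_const_nhds (x := h) (f := atTop (α := ℝ))).sub
          ((tendsto_const_nhds (x := Real.log a₀) (f := atTop (α := ℝ))).div_atTop tendsto_id)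
        simpa using this
      have hlog2 : Tendsto (fun L : ℝ => Real.log (h - Real.log a₀ / L)) atTop
          (nhds (Real.log h)) := (Real.continuousAt_log hh.ne').tendsto.comp hc
      have h2 : Tendsto (fun L : ℝ => Real.log (h - Real.log a₀ / L) * L⁻¹) atTop (nhds 0) := by
        simpa using hlog2.mul tendsto_inv_atTop_zero
      have hbig : Tendsto (fun L : ℝ => h * L - Real.log a₀) atTop atTop := by
        have := tendsto_atTop_add_const_right atTop (-Real.log a₀)
          (tendsto_id.const_mul_atTop hh)
        simpa [sub_eq_add_neg] using this
      have hsum : Tendsto (fun L : ℝ => Real.log L / L + Real.log (h - Real.log a₀ / L) * L⁻¹)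
          atTop (nhds 0) := by simpa using h1.add h2
      refine hsum.congr' ?_
      filter_upwards [eventually_gt_atTop (0 : ℝ), hbig.eventually_gt_atTop 0] with L hL0 hLbig
      have hLne : L ≠ 0 := hL0.ne'
      have hfac : h * L - Real.log a₀ = L * (h - Real.log a₀ / L) := by field_simp
      have hpos2 : 0 < h - Real.log a₀ / L :=
        sub_pos.mpr ((div_lt_iff₀ hL0).mpr (by linarith))
      rw [hfac, Real.log_mul hLne hpos2.ne']
      ring
    exact key.comp hLtop
  have hbig : Tendsto (fun lam : ℝ => h * Real.log lam - Real.log a₀) atTop atTop := by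
    have := tendsto_atTop_add_const_right atTop (-Real.log a₀)
      (hLtop.const_mul_atTop hh)
    simpa [sub_eq_add_neg] using this
  -- limits of the auxiliary ratio terms
  have t1 : Tendsto (fun lam : ℝ => Real.log ζ / Real.log lam) atTop (nhds 0) := by
    simpa [div_eq_mul_inv] using hinv.const_mul (Real.log ζ)
  have t3 : Tendsto (fun lam : ℝ => Real.log (1 - ζ * lam ^ (-α)) / Real.log lam)
      atTop (nhds 0) := by
    have hB : Tendsto (fun lam : ℝ => Real.log (1 - ζ * lam ^ (-α))) atTop (nhds 0) := by
      have h1 : Tendsto (fun lam : ℝ => 1 - ζ * lam ^ (-α)) atTop (nhds 1) := by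
        simpa using (tendsto_const_nhds (x := (1:ℝ)) (f := atTop (α := ℝ))).sub hq0
      have := (Real.continuousAt_log one_ne_zero).tendsto.comp h1
      simpa [Function.comp_def] using this
    simpa [div_eq_mul_inv] using hB.mul hinv
  have t4 : Tendsto (fun lam : ℝ => Real.log (Real.log a₁) / Real.log lam) atTop (nhds 0) := by
    simpa [div_eq_mul_inv] using hinv.const_mul (Real.log (Real.log a₁))
  have hnum : Tendsto (fun lam : ℝ =>
      α - (Real.log ζ + Real.log (h * Real.log lam - Real.log a₀)
        - Real.log (1 - ζ * lam ^ (-α)) - Real.log (Real.log a₁)) / Real.log lam)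
      atTop (nhds α) := by
    have hT : Tendsto (fun lam : ℝ =>
        (Real.log ζ + Real.log (h * Real.log lam - Real.log a₀)
          - Real.log (1 - ζ * lam ^ (-α)) - Real.log (Real.log a₁)) / Real.log lam)
        atTop (nhds 0) := by
      have h0 : Tendsto (fun lam : ℝ => Real.log ζ / Real.log lam
          + Real.log (h * Real.log lam - Real.log a₀) / Real.log lam
          - Real.log (1 - ζ * lam ^ (-α)) / Real.log lam
          - Real.log (Real.log a₁) / Real.log lam) atTop (nhds 0) := by
        simpa using ((t1.add hA).sub t3).sub t4
      exact h0.congr fun lam => by ring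
    simpa using (tendsto_const_nhds (x := α) (f := atTop (α := ℝ))).sub hT
  have hden : Tendsto (fun lam : ℝ => h + (Real.log a₁ - Real.log a₀) / Real.log lam)
      atTop (nhds h) := by
    have : Tendsto (fun lam : ℝ => (Real.log a₁ - Real.log a₀) / Real.log lam)
        atTop (nhds 0) := by
      simpa [div_eq_mul_inv] using hinv.const_mul (Real.log a₁ - Real.log a₀)
    simpa using (tendsto_const_nhds (x := h) (f := atTop (α := ℝ))).add this
  have hg : Tendsto (fun lam : ℝ =>
      (α - (Real.log ζ + Real.log (h * Real.log lam - Real.log a₀)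
        - Real.log (1 - ζ * lam ^ (-α)) - Real.log (Real.log a₁)) / Real.log lam)
      / (h + (Real.log a₁ - Real.log a₀) / Real.log lam)) atTop (nhds (α / h)) :=
    hnum.div hden hh.ne'
  refine hg.congr' ?_
  filter_upwards [eventually_gt_atTop (1 : ℝ),
    hq0.eventually_lt_const (by norm_num : (0:ℝ) < 1/2),
    hbig.eventually_gt_atTop 0] with lam hlam1 hqhalf hLb
  have hlam0 : 0 < lam := lt_trans one_pos hlam1
  have hL0 : 0 < Real.log lam := Real.log_pos hlam1
  set L := Real.log lam with hLdef
  have hrpα : 0 < lam ^ (-α) := Real.rpow_pos_of_pos hlam0 _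
  have hrph : 0 < lam ^ (-h) := Real.rpow_pos_of_pos hlam0 _
  have hq : 0 < ζ * lam ^ (-α) := mul_pos hζ hrpα
  have hp : 0 < 1 - ζ * lam ^ (-α) := by linarith
  have ha2 : 0 < a₀ * lam ^ (-h) := mul_pos ha₀ hrph
  have hloga2 : Real.log (a₀ * lam ^ (-h)) = Real.log a₀ + (-h) * L := by
    rw [Real.log_mul ha₀.ne' hrph.ne', Real.log_rpow hlam0]
  have e1 : -(1 - (1 - ζ * lam ^ (-α))) / (1 - ζ * lam ^ (-α)) *
      (Real.log (a₀ * lam ^ (-h)) / Real.log a₁)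
      = (ζ * lam ^ (-α)) * (h * L - Real.log a₀) /
        ((1 - ζ * lam ^ (-α)) * Real.log a₁) := by
    rw [hloga2]; field_simp; ring
  have e2 : Real.log ((ζ * lam ^ (-α)) * (h * L - Real.log a₀) /
      ((1 - ζ * lam ^ (-α)) * Real.log a₁))
      = (Real.log ζ + (-α) * L) + Real.log (h * L - Real.log a₀)
        - (Real.log (1 - ζ * lam ^ (-α)) + Real.log (Real.log a₁)) := by
    rw [Real.log_div (by positivity) (by positivity),
      Real.log_mul hq.ne' hLb.ne', Real.log_mul hp.ne' hlogA.ne',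
      Real.log_mul hζ.ne' hrpα.ne', Real.log_rpow hlam0]
  have e3 : Real.log (a₁ / (a₀ * lam ^ (-h)))
      = Real.log a₁ - (Real.log a₀ + (-h) * L) := by
    rw [Real.log_div (by positivity) ha2.ne', hloga2]
  have hD : (0:ℝ) < Real.log a₁ - (Real.log a₀ + (-h) * L) := by
    have : 0 < h * L - Real.log a₀ := hLb
    linarith
  show _ = _
  rw [e1, e2, e3]
  have hDen : h + (Real.log a₁ - Real.log a₀) / L ≠ 0 := by
    have h1 : 0 < (h * L + (Real.log a₁ - Real.log a₀)) / L := div_pos (by linarith) hL0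
    have h2 : (h * L + (Real.log a₁ - Real.log a₀)) / L
        = h + (Real.log a₁ - Real.log a₀) / L := by field_simp
    rw [h2] at h1
    exact h1.ne'
  field_simp
  ring
end

section
/- Let T be a real torus (compact connected abelian Lie group) with Lie algebra 𝔱, let Ω be a finite set of ℝ-linear functionals ω : 𝔱 → ℂ, and let c_ω ∈ ℂ be coefficients. Suppose ζ(exp X) = Σ_{ω∈Ω} c_ω e^{ω(X)} defines a function on T (i.e., the expression is well-defined on T). If ζ is not identically zero on T, then the order of vanishing of ζ at any point of T is strictly less than |Ω|; equivalently, at every t₀ ∈ T some partial derivative of ζ of total order < |Ω| is nonzero at t₀. -/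
open Finset Polynomial

/-- A point separating finitely many distinct linear functionals. -/
lemma exists_separating {E : Type*} [AddCommGroup E] [Module ℝ E]
    (Ω : Finset (E →ₗ[ℝ] ℂ)) :
    ∃ Y : E, ∀ ω₁ ∈ Ω, ∀ ω₂ ∈ Ω, ω₁ ≠ ω₂ → ω₁ Y ≠ ω₂ Y := by
  classical
  set s : Finset (Subspace ℝ E) :=
    ((Ω ×ˢ Ω).filter (fun p => p.1 ≠ p.2)).image (fun p => LinearMap.ker (p.1 - p.2)) with hs
  have htop : ⊤ ∉ s := by
    intro h
    simp only [hs, Finset.mem_image, Finset.mem_filter] at h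
    obtain ⟨p, ⟨-, hne⟩, hker⟩ := h
    exact hne (sub_eq_zero.mp (LinearMap.ker_eq_top.mp hker))
  have hne := Subspace.biUnion_ne_univ_of_top_notMem htop
  rw [Ne, Set.eq_univ_iff_forall] at hne
  push_neg at hne
  obtain ⟨Y, hY⟩ := hne
  refine ⟨Y, fun ω₁ h₁ ω₂ h₂ hne12 heq => ?_⟩
  apply hY
  simp only [Set.mem_iUnion]
  refine ⟨LinearMap.ker (ω₁ - ω₂), ?_, ?_⟩
  · simp only [hs, Finset.mem_image, Finset.mem_filter]
    exact ⟨(ω₁, ω₂), ⟨Finset.mk_mem_product h₁ h₂, hne12⟩, rfl⟩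
  · simp [LinearMap.mem_ker, sub_eq_zero, heq]

/-- Vandermonde-type lemma via Lagrange interpolation. -/
lemma vandermonde_vanish {ι : Type*} (s : Finset ι) (z a : ι → ℂ)
    (hz : Set.InjOn z s)
    (h : ∀ l < s.card, ∑ i ∈ s, a i * z i ^ l = 0) :
    ∀ i ∈ s, a i = 0 := by
  classical
  intro i hi
  have hcard : 0 < s.card := Finset.card_pos.mpr ⟨i, hi⟩
  set q := Lagrange.basis s z i with hq
  have hdeg : q.natDegree < s.card := by
    rw [hq, Lagrange.natDegree_basis hz hi]; omega
  have key : a i = ∑ j ∈ s, a j * q.eval (z j) := by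
    rw [Finset.sum_eq_single i]
    · rw [hq, Lagrange.eval_basis_self hz hi, mul_one]
    · intro j hj hji
      rw [hq, Lagrange.eval_basis_of_ne hji.symm hj, mul_zero]
    · intro h'; exact absurd hi h'
  rw [key]
  calc ∑ j ∈ s, a j * q.eval (z j)
      = ∑ j ∈ s, ∑ l ∈ Finset.range s.card, q.coeff l * (a j * z j ^ l) := by
        refine Finset.sum_congr rfl fun j _ => ?_
        rw [eval_eq_sum_range' hdeg, Finset.mul_sum]
        refine Finset.sum_congr rfl fun l _ => by ring
    _ = ∑ l ∈ Finset.range s.card, q.coeff l * ∑ j ∈ s, a j * z j ^ l := by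
        rw [Finset.sum_comm]
        refine Finset.sum_congr rfl fun l _ => ?_
        rw [Finset.mul_sum]
    _ = 0 := by
        refine Finset.sum_eq_zero fun l hl => ?_
        rw [h l (Finset.mem_range.mp hl), mul_zero]

/-- Iterated derivative of a finite exponential sum. -/
lemma iteratedDeriv_expSum {ι : Type*} (s : Finset ι) (a z : ι → ℂ) (n : ℕ) :
    iteratedDeriv n (fun t : ℝ => ∑ i ∈ s, a i * Complex.exp (t * z i)) =
      fun t : ℝ => ∑ i ∈ s, a i * z i ^ n * Complex.exp (t * z i) := by
  induction n with
  | zero => simp only [iteratedDeriv_zero, pow_zero, mul_one]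
  | succ n ih =>
    rw [iteratedDeriv_succ, ih]
    funext t
    have hd : HasDerivAt (fun t : ℝ => ∑ i ∈ s, a i * z i ^ n * Complex.exp (t * z i))
        (∑ i ∈ s, a i * z i ^ (n + 1) * Complex.exp (t * z i)) t := by
      refine HasDerivAt.fun_sum fun i _ => ?_
      have h1 : HasDerivAt (fun w : ℂ => Complex.exp (w * z i))
          (Complex.exp ((t : ℂ) * z i) * (1 * z i)) (t : ℂ) :=
        ((hasDerivAt_id ((t : ℝ) : ℂ)).mul_const (z i)).cexp
      have hb : HasDerivAt (fun t : ℝ => Complex.exp ((t : ℂ) * z i))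
          (Complex.exp ((t : ℂ) * z i) * (1 * z i)) t := h1.comp_ofReal
      have := hb.const_mul (a i * z i ^ n)
      convert this using 1
      · rfl
      ring
    exact hd.deriv

/-- Lemma 3.4 (order bound for exponential sums on a torus, pulled back to the Lie
algebra `𝔱` via the exponential map): if `ζ(exp X) = Σ_{ω ∈ Ω} c_ω e^{ω(X)}` is not
identically zero, then at every point `X₀` the order of vanishing of `ζ` is less
than `|Ω|`; i.e. some directional derivative of order `l < |Ω|` is nonzero at `X₀`. -/
theorem stmt_7 (E : Type*) [NormedAddCommGroup E] [NormedSpace ℝ E]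
    (Ω : Finset (E →ₗ[ℝ] ℂ)) (c : (E →ₗ[ℝ] ℂ) → ℂ)
    (ζ : E → ℂ)
    (hζ : ∀ X : E, ζ X = ∑ ω ∈ Ω, c ω * Complex.exp (ω X))
    (hne : ∃ X : E, ζ X ≠ 0) (X₀ : E) :
    ∃ (Y : E) (l : ℕ), l < Ω.card ∧
      iteratedDeriv l (fun t : ℝ => ζ (X₀ + t • Y)) 0 ≠ 0 := by
  classical
  set a : (E →ₗ[ℝ] ℂ) → ℂ := fun ω => c ω * Complex.exp (ω X₀) with ha
  obtain ⟨Y, hY⟩ := exists_separating Ω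
  by_contra hcon
  push_neg at hcon
  have hrw : (fun t : ℝ => ζ (X₀ + t • Y)) =
      fun t : ℝ => ∑ ω ∈ Ω, a ω * Complex.exp ((t : ℂ) * ω Y) := by
    funext t
    rw [hζ]
    refine Finset.sum_congr rfl fun ω _ => ?_
    rw [map_add, map_smul, Complex.real_smul, Complex.exp_add, ha]
    ring
  have hsum : ∀ l < Ω.card, ∑ ω ∈ Ω, a ω * (ω Y) ^ l = 0 := by
    intro l hl
    have := hcon Y l hl
    rw [hrw, iteratedDeriv_expSum] at this
    simpa using this
  have hinj : Set.InjOn (fun ω : E →ₗ[ℝ] ℂ => ω Y) Ω := by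
    intro ω₁ h₁ ω₂ h₂ heq
    by_contra hne12
    exact hY ω₁ h₁ ω₂ h₂ hne12 heq
  have hzero := vandermonde_vanish Ω (fun ω => ω Y) a hinj hsum
  obtain ⟨X, hX⟩ := hne
  apply hX
  rw [hζ]
  refine Finset.sum_eq_zero fun ω hω => ?_
  have : c ω = 0 := by
    have := hzero ω hω
    rw [ha] at this
    simpa [Complex.exp_ne_zero] using this
  rw [this, zero_mul]
end

section
/- Let G act on a topological space Z, μ a probability measure on G, and f : Z → (0,∞) continuous. Suppose there exist a₁ > 1 > a₂ > 0, 0 < p < 1 satisfying (1-p)·ln(1/a₂) < p·ln(a₁), and ρ₀ > 0 such that: (1) for every z with f(z) < ρ₀, μ({g : f(gz) ≥ a₁·f(z)}) ≥ p; and (2) for every z, f(gz) ≥ a₂·f(z) for μ-almost every g. Then, with δ = δ₀(a₁,a₂;p) the critical exponent, the constants c = p·a₁^{-δ} + (1-p)·a₂^{-δ} ∈ (0,1) and b = (a₂·ρ₀)^{-δ} > 0 satisfy ∫_G f(gz)^{-δ} dμ(g) ≤ c·f(z)^{-δ} + b for every z ∈ Z. -/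
open MeasureTheory

set_option maxHeartbeats 1600000 in
/-- Proposition 2.3 (from expansion to contraction): if `f` is expanded by factor
`a₁` with probability at least `p` wherever `f < ρ₀`, and is never contracted by
more than the factor `a₂` (μ-a.s.), then with `δ = δ₀(a₁,a₂;p)` the function
`f^{-δ}` satisfies `A_μ f^{-δ} ≤ c·f^{-δ} + b` with
`c = p·a₁^{-δ} + (1-p)·a₂^{-δ} ∈ (0,1)` and `b = (a₂·ρ₀)^{-δ} > 0`. -/
theorem stmt_11
    (G : Type*) [Group G] [MeasurableSpace G]
    (Z : Type*) [TopologicalSpace Z] [MulAction G Z]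
    (μ : Measure G) [IsProbabilityMeasure μ]
    (f : Z → ℝ) (hfcont : Continuous f) (hfpos : ∀ z, 0 < f z)
    (a₁ a₂ p ρ₀ : ℝ) (ha₁ : 1 < a₁) (ha₂0 : 0 < a₂) (ha₂1 : a₂ < 1)
    (hp0 : 0 < p) (hp1 : p < 1) (hρ₀ : 0 < ρ₀)
    (hbal : (1 - p) * Real.log (1 / a₂) < p * Real.log a₁)
    (hexp : ∀ z : Z, f z < ρ₀ →
      ENNReal.ofReal p ≤ μ {g : G | a₁ * f z ≤ f (g • z)})
    (hlow : ∀ z : Z, ∀ᵐ g ∂μ, a₂ * f z ≤ f (g • z)) :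
    let δ : ℝ :=
      -Real.log (-(1 - p) / p * (Real.log a₂ / Real.log a₁)) / Real.log (a₁ / a₂)
    let c : ℝ := p * a₁ ^ (-δ) + (1 - p) * a₂ ^ (-δ)
    let b : ℝ := (a₂ * ρ₀) ^ (-δ)
    0 < c ∧ c < 1 ∧ 0 < b ∧
      ∀ z : Z, ∫ g, (f (g • z)) ^ (-δ) ∂μ ≤ c * (f z) ^ (-δ) + b := by
  intro δ c b
  have hL1 : 0 < Real.log a₁ := Real.log_pos ha₁
  have hL2 : Real.log a₂ < 0 := Real.log_neg ha₂0 ha₂1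
  set L1 := Real.log a₁ with hL1def
  set L2 := Real.log a₂ with hL2def
  set r : ℝ := -(1 - p) / p * (L2 / L1) with hrdef
  have hr0 : 0 < r := by
    have : r = (1 - p) * (-L2) / (p * L1) := by rw [hrdef]; ring
    rw [this]
    apply div_pos (mul_pos (by linarith) (by linarith)) (mul_pos hp0 hL1)
  have hbal' : (1 - p) * (-L2) < p * L1 := by
    have : Real.log (1 / a₂) = -L2 := by rw [one_div, Real.log_inv]
    linarith [hbal, this ▸ hbal]
  have hr1 : r < 1 := by
    have : r = (1 - p) * (-L2) / (p * L1) := by rw [hrdef]; ring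
    rw [this, div_lt_one (mul_pos hp0 hL1)]
    exact hbal'
  have hlog12 : Real.log (a₁ / a₂) = L1 - L2 :=
    Real.log_div (by linarith) (by linarith)
  have hL12 : 0 < L1 - L2 := by linarith
  have hδ : 0 < δ := by
    show 0 < -Real.log r / Real.log (a₁ / a₂)
    rw [hlog12]
    exact div_pos (by linarith [Real.log_neg hr0 hr1]) hL12
  have hδeq : δ * (L1 - L2) = -Real.log r := by
    show -Real.log r / Real.log (a₁ / a₂) * (L1 - L2) = -Real.log r
    rw [hlog12]; field_simp
  set A : ℝ := a₁ ^ (-δ) with hAdef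
  set B : ℝ := a₂ ^ (-δ) with hBdef
  have hA0 : 0 < A := Real.rpow_pos_of_pos (by linarith) _
  have hB0 : 0 < B := Real.rpow_pos_of_pos ha₂0 _
  have hAexp : A = Real.exp (L1 * (-δ)) := Real.rpow_def_of_pos (by linarith) _
  have hBexp : B = Real.exp (L2 * (-δ)) := Real.rpow_def_of_pos ha₂0 _
  have hAB : A = r * B := by
    have h1 : A = Real.exp (-(δ * (L1 - L2))) * Real.exp (L2 * (-δ)) := by
      rw [hAexp, ← Real.exp_add]; ring_nf
    rw [h1, hδeq, neg_neg, Real.exp_log hr0, ← hBexp]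
  have hkey : p * A * L1 + (1 - p) * B * L2 = 0 := by
    have hprL1 : p * r * L1 = -((1 - p) * L2) := by
      rw [hrdef]; field_simp
    have : p * A * L1 = p * r * L1 * B := by rw [hAB]; ring
    rw [this, hprL1]; ring
  -- c < 1
  have he1 : A * (1 + δ * L1) < 1 := by
    have hne : δ * L1 ≠ 0 := by positivity
    have h := Real.add_one_lt_exp hne
    have hAe : A * Real.exp (δ * L1) = 1 := by
      rw [hAexp, ← Real.exp_add]; ring_nf; exact Real.exp_zero
    calc A * (1 + δ * L1) < A * Real.exp (δ * L1) := by
          apply mul_lt_mul_of_pos_left (by linarith) hA0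
      _ = 1 := hAe
  have he2 : B * (1 + δ * L2) < 1 := by
    have hne : δ * L2 ≠ 0 := by
      intro h
      rcases mul_eq_zero.1 h with h | h
      · exact hδ.ne' h
      · exact hL2.ne h
    have h := Real.add_one_lt_exp hne
    have hBe : B * Real.exp (δ * L2) = 1 := by
      rw [hBexp, ← Real.exp_add]; ring_nf; exact Real.exp_zero
    calc B * (1 + δ * L2) < B * Real.exp (δ * L2) := by
          apply mul_lt_mul_of_pos_left (by linarith) hB0
      _ = 1 := hBe
  have hc1 : c < 1 := by
    have h1 : p * (A * (1 + δ * L1)) < p * 1 :=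
      mul_lt_mul_of_pos_left he1 hp0
    have h2 : (1 - p) * (B * (1 + δ * L2)) < (1 - p) * 1 :=
      mul_lt_mul_of_pos_left he2 (by linarith)
    have h3 : δ * (p * A * L1 + (1 - p) * B * L2) = 0 := by rw [hkey]; ring
    show p * A + (1 - p) * B < 1
    nlinarith [h1, h2, h3]
  have hc0 : 0 < c :=
    add_pos (mul_pos hp0 hA0) (mul_pos (by linarith) hB0)
  have hb0 : 0 < b := Real.rpow_pos_of_pos (mul_pos ha₂0 hρ₀) _
  refine ⟨hc0, hc1, hb0, fun z => ?_⟩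
  have hfz := hfpos z
  by_cases hI : Integrable (fun g => (f (g • z)) ^ (-δ)) μ
  · rcases le_or_gt ρ₀ (f z) with hz | hz
    · -- f z ≥ ρ₀ : bound by b a.e.
      have hbd : ∀ᵐ g ∂μ, (f (g • z)) ^ (-δ) ≤ b := by
        filter_upwards [hlow z] with g hg
        have h1 : a₂ * ρ₀ ≤ f (g • z) := le_trans
          (by nlinarith) hg
        exact Real.rpow_le_rpow_of_nonpos (mul_pos ha₂0 hρ₀) h1 (by linarith)
      calc ∫ g, (f (g • z)) ^ (-δ) ∂μ ≤ ∫ _, b ∂μ :=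
            integral_mono_ae hI (integrable_const b) hbd
        _ = b := by simp
        _ ≤ c * (f z) ^ (-δ) + b := by
            have h2 : 0 < (f z : ℝ) ^ (-δ) := Real.rpow_pos_of_pos hfz _
            linarith [mul_pos hc0 h2]
    · -- f z < ρ₀
      set F : G → ℝ := fun g => (f (g • z)) ^ (-δ) with hFdef
      have hmeas := hI.1
      set F' : G → ℝ := hmeas.mk F with hF'def
      have hFF' : F =ᵐ[μ] F' := hmeas.ae_eq_mk
      set T : ℝ := (a₁ * f z) ^ (-δ) with hTdef
      set T' : ℝ := (a₂ * f z) ^ (-δ) with hT'def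
      have ha₁fz : 0 < a₁ * f z := mul_pos (by linarith) hfz
      have ha₂fz : 0 < a₂ * f z := mul_pos ha₂0 hfz
      have hTT' : T ≤ T' := Real.rpow_le_rpow_of_nonpos ha₂fz
        (by nlinarith) (by linarith)
      set E : Set G := {g : G | a₁ * f z ≤ f (g • z)} with hEdef
      have hiff : ∀ g, (g ∈ E ↔ F g ≤ T) := by
        intro g
        constructor
        · intro hg
          exact Real.rpow_le_rpow_of_nonpos ha₁fz hg (by linarith)
        · intro hg
          have := (Real.rpow_le_rpow_iff_of_neg ha₁fz
            (hfpos (g • z)) (neg_lt_zero.2 hδ)).1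
          -- F g = f(g•z)^(-δ) ≤ T = (a₁ * f z)^(-δ)
          have h2 : (f (g • z)) ^ (-δ) ≤ (a₁ * f z) ^ (-δ) := hg
          exact (Real.rpow_le_rpow_iff_of_neg (hfpos (g • z)) ha₁fz
            (neg_lt_zero.2 hδ)).1 h2
      set E' : Set G := {g : G | F' g ≤ T} with hE'def
      have hE'meas : MeasurableSet E' :=
        measurableSet_le hmeas.measurable_mk measurable_const
      have hEE' : E =ᵐ[μ] E' := by
        rw [Filter.eventuallyEq_set]
        filter_upwards [hFF'] with g hg
        rw [hiff g]
        show F g ≤ T ↔ F' g ≤ T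
        rw [hg]
      have hμE' : ENNReal.ofReal p ≤ μ E' := by
        rw [← measure_congr hEE']
        exact hexp z hz
      set m : ℝ := (μ E').toReal with hmdef
      have hm1 : m ≤ 1 := by
        rw [hmdef]
        have := prob_le_one (μ := μ) (s := E')
        simpa using ENNReal.toReal_mono (by simp) this
      have hmp : p ≤ m := by
        have := ENNReal.toReal_mono (measure_ne_top μ E') hμE'
        rwa [ENNReal.toReal_ofReal hp0.le] at this
      set Gbd : G → ℝ := fun g => T' + E'.indicator (fun _ => T - T') g
        with hGdef
      have hGint : Integrable Gbd μ :=
        (integrable_const T').add ((integrable_const (T - T')).indicator hE'meas)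
      have hFG : F ≤ᵐ[μ] Gbd := by
        filter_upwards [hFF', hlow z] with g hg1 hg2
        by_cases hgE : g ∈ E'
        · have : F g ≤ T := by rw [hg1]; exact hgE
          simp only [hGdef, Set.indicator_of_mem hgE]
          linarith
        · simp only [hGdef, Set.indicator_of_notMem hgE, add_zero]
          exact Real.rpow_le_rpow_of_nonpos ha₂fz hg2 (by linarith)
      have hGint_val : ∫ g, Gbd g ∂μ = T' + (T - T') * m := by
        rw [hGdef]
        rw [integral_add (integrable_const T')
          ((integrable_const (T - T')).indicator hE'meas)]
        rw [integral_indicator_const _ hE'meas]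
        simp [hmdef, smul_eq_mul, Measure.real]
        ring
      have hstep : ∫ g, F g ∂μ ≤ T' + (T - T') * p := by
        calc ∫ g, F g ∂μ ≤ ∫ g, Gbd g ∂μ := integral_mono_ae hI hGint hFG
          _ = T' + (T - T') * m := hGint_val
          _ ≤ T' + (T - T') * p := by nlinarith
      have hTfac : T = A * (f z) ^ (-δ) := by
        rw [hTdef, hAdef, Real.mul_rpow (by linarith) hfz.le]
      have hT'fac : T' = B * (f z) ^ (-δ) := by
        rw [hT'def, hBdef, Real.mul_rpow ha₂0.le hfz.le]
      have hfinal : T' + (T - T') * p = c * (f z) ^ (-δ) := by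
        rw [hTfac, hT'fac]; show _ = (p * A + (1 - p) * B) * _; ring
      calc ∫ g, F g ∂μ ≤ T' + (T - T') * p := hstep
        _ = c * (f z) ^ (-δ) := hfinal
        _ ≤ c * (f z) ^ (-δ) + b := by linarith
  · rw [integral_undef hI]
    have h2 : 0 < (f z : ℝ) ^ (-δ) := Real.rpow_pos_of_pos hfz _
    linarith [mul_pos hc0 h2]
end
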